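/- arXiv:math/0101043 — 4 statements merged into one kernel-verified Lean document; each statement's English description precedes it below -/
import Mathlib

section
/- With Γ, φ and the Novikov ring Λ_φ as above (φ injective), Λ_φ with pointwise addition and convolution product is a field. -/
/-- The Novikov condition. -/
def NovikovCond {Γ : Type*} [AddCommGroup Γ] (φ : Γ →+ ℝ) (f : Γ → ℂ) : Prop :=
  ∀ R : ℝ, {γ : Γ | f γ ≠ 0 ∧ φ γ ≤ R}.Finite

open HahnSeries

section Aux

variable {Γ : Type*} [AddCommGroup Γ] [LinearOrder Γ] [IsOrderedAddMonoid Γ] (φ : Γ →+ ℝ)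

theorem nov_bound {f : Γ → ℂ} (hf : NovikovCond φ f) :
    ∃ a : ℝ, ∀ γ, f γ ≠ 0 → a ≤ φ γ := by
  classical
  by_cases hs : ∃ s, f s ≠ 0
  · obtain ⟨s, hs⟩ := hs
    have hfin := hf (φ s)
    set F := hfin.toFinset with hF
    have hsF : s ∈ F := by simp [hF, hs]
    have hne : (F.image φ).Nonempty := ⟨φ s, Finset.mem_image_of_mem _ hsF⟩
    refine ⟨(F.image φ).min' hne, fun γ hγ => ?_⟩
    by_cases hγs : φ γ ≤ φ s
    · exact Finset.min'_le _ _ (Finset.mem_image_of_mem _ (by simp [hF, hγ, hγs]))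
    · exact le_trans (Finset.min'_le _ _ (Finset.mem_image_of_mem _ hsF)) (le_of_not_ge hγs)
  · exact ⟨0, fun γ hγ => absurd ⟨γ, hγ⟩ hs⟩

theorem nov_isPWO (hm : ∀ a b : Γ, a ≤ b ↔ φ a ≤ φ b) {f : Γ → ℂ}
    (hf : NovikovCond φ f) : {γ | f γ ≠ 0}.IsPWO := by
  refine Set.IsWF.isPWO ?_
  rw [Set.isWF_iff_no_descending_seq]
  intro g hg hmem
  have hsub : ∀ n : ℕ, g n ∈ {γ : Γ | f γ ≠ 0 ∧ φ γ ≤ φ (g 0)} := by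
    intro n
    exact ⟨hmem n, (hm _ _).1 (hg.antitone (Nat.zero_le n))⟩
  exact Set.infinite_of_injective_forall_mem hg.injective hsub (hf (φ (g 0)))

theorem nov_single (a : Γ) (c : ℂ) :
    NovikovCond φ ((HahnSeries.single a c : HahnSeries Γ ℂ)).coeff := by
  intro R
  apply (Set.finite_singleton a).subset
  rintro γ ⟨hγ, -⟩
  exact HahnSeries.eq_of_mem_support_single hγ

theorem nov_one : NovikovCond φ ((1 : HahnSeries Γ ℂ)).coeff := by
  simpa using nov_single φ 0 1

theorem nov_sub {x y : HahnSeries Γ ℂ} (hx : NovikovCond φ x.coeff)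
    (hy : NovikovCond φ y.coeff) : NovikovCond φ (x - y).coeff := by
  intro R
  apply ((hx R).union (hy R)).subset
  rintro γ ⟨hγ, hR⟩
  by_cases h : x.coeff γ ≠ 0
  · exact Or.inl ⟨h, hR⟩
  · push_neg at h
    refine Or.inr ⟨fun h' => hγ ?_, hR⟩
    simp [HahnSeries.coeff_sub, h, h']

theorem nov_mul {x y : HahnSeries Γ ℂ} (hx : NovikovCond φ x.coeff)
    (hy : NovikovCond φ y.coeff) : NovikovCond φ (x * y).coeff := by
  obtain ⟨a, ha⟩ := nov_bound φ hx
  obtain ⟨b, hb⟩ := nov_bound φ hy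
  intro R
  have hsub : {γ | (x * y).coeff γ ≠ 0 ∧ φ γ ≤ R} ⊆
      (fun p : Γ × Γ => p.1 + p.2) ''
        ({γ | x.coeff γ ≠ 0 ∧ φ γ ≤ R - b} ×ˢ {γ | y.coeff γ ≠ 0 ∧ φ γ ≤ R - a}) := by
    rintro γ ⟨hγ, hR⟩
    obtain ⟨α, hα, β, hβ, rfl⟩ :=
      HahnSeries.support_mul_subset ((HahnSeries.mem_support _ _).2 hγ)
    have h1 : a ≤ φ α := ha α hα
    have h2 : b ≤ φ β := hb β hβ
    rw [map_add] at hR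
    exact ⟨(α, β), ⟨⟨hα, by linarith⟩, ⟨hβ, by linarith⟩⟩, rfl⟩
  exact (((hx (R - b)).prod (hy (R - a))).image _).subset hsub

theorem nov_pow {y : HahnSeries Γ ℂ} (hy : NovikovCond φ y.coeff) :
    ∀ n : ℕ, NovikovCond φ ((y ^ n)).coeff := by
  intro n
  induction n with
  | zero => simpa using nov_one φ
  | succ n ih => rw [pow_succ]; exact nov_mul φ ih hy

theorem nov_eps {y : HahnSeries Γ ℂ} (hy : NovikovCond φ y.coeff)
    (hpos : ∀ γ, y.coeff γ ≠ 0 → 0 < φ γ) :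
    ∃ ε : ℝ, 0 < ε ∧ ∀ γ, y.coeff γ ≠ 0 → ε ≤ φ γ := by
  classical
  set F := (hy 1).toFinset with hF
  by_cases hne : (F.image φ).Nonempty
  · refine ⟨min ((F.image φ).min' hne) 1, ?_, ?_⟩
    · refine lt_min ?_ one_pos
      obtain ⟨γ, hγ, hmin⟩ := Finset.mem_image.1 ((F.image φ).min'_mem hne)
      rw [← hmin]
      exact hpos γ ((Set.Finite.mem_toFinset _).1 hγ).1
    · intro γ hγ
      by_cases h1 : φ γ ≤ 1
      · exact le_trans (min_le_left _ _)
          (Finset.min'_le _ _ (Finset.mem_image_of_mem _ (by simp [hF, hγ, h1])))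
      · exact le_trans (min_le_right _ _) (le_of_not_ge h1)
  · refine ⟨1, one_pos, fun γ hγ => ?_⟩
    by_contra h
    push_neg at h
    exact hne ⟨φ γ, Finset.mem_image_of_mem _ (by simp [hF, hγ]; linarith)⟩

theorem pow_support_bound {y : HahnSeries Γ ℂ} {ε : ℝ}
    (hε : ∀ γ, y.coeff γ ≠ 0 → ε ≤ φ γ) :
    ∀ (n : ℕ) (γ : Γ), (y ^ n).coeff γ ≠ 0 → (n : ℝ) * ε ≤ φ γ := by
  intro n
  induction n with
  | zero =>
    intro γ hγ
    have hγ0 : γ = 0 := by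
      have : γ ∈ ((1 : HahnSeries Γ ℂ)).support := by simpa using hγ
      rwa [HahnSeries.support_one, Set.mem_singleton_iff] at this
    simp [hγ0]
  | succ n ih =>
    intro γ hγ
    rw [pow_succ] at hγ
    obtain ⟨α, hα, β, hβ, rfl⟩ :=
      HahnSeries.support_mul_subset ((HahnSeries.mem_support _ _).2 hγ)
    have h1 : (n : ℝ) * ε ≤ φ α := ih α hα
    have h2 : ε ≤ φ β := hε β hβ
    rw [map_add]
    push_cast
    linarith

theorem nov_inv (hm : ∀ a b : Γ, a ≤ b ↔ φ a ≤ φ b) {x : HahnSeries Γ ℂ}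
    (hx : NovikovCond φ x.coeff) (hx0 : x ≠ 0) :
    ∃ v : HahnSeries Γ ℂ, NovikovCond φ v.coeff ∧ x * v = 1 := by
  set r := x.leadingCoeff⁻¹ with hrdef
  have hr : r * x.leadingCoeff = 1 :=
    inv_mul_cancel₀ (HahnSeries.leadingCoeff_ne_zero.mpr hx0)
  set y := 1 - HahnSeries.single (-x.order) r * x with hydef
  have hyo : 0 < y.orderTop := HahnSeries.unit_aux x hr (-x.order) (neg_add_cancel _)
  have hynov : NovikovCond φ y.coeff :=
    nov_sub φ (nov_one φ) (nov_mul φ (nov_single φ _ _) hx)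
  have hypos : ∀ γ, y.coeff γ ≠ 0 → 0 < φ γ := by
    intro γ hγ
    have hle : y.orderTop ≤ (γ : WithTop Γ) := HahnSeries.orderTop_le_of_coeff_ne_zero hγ
    have hγpos : (0 : Γ) < γ := by exact_mod_cast lt_of_lt_of_le hyo hle
    have h0 : ¬ γ ≤ 0 := not_le.2 hγpos
    rw [hm] at h0
    rw [map_zero] at h0
    linarith [not_le.1 h0]
  obtain ⟨ε, hε0, hε⟩ := nov_eps φ hynov hypos
  set v := (HahnSeries.SummableFamily.powers y).hsum with hvdef
  have hvnov : NovikovCond φ v.coeff := by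
    intro R
    obtain ⟨N, hN⟩ := exists_nat_gt (R / ε)
    have hsub : {γ | v.coeff γ ≠ 0 ∧ φ γ ≤ R} ⊆
        ⋃ n ∈ Finset.range (N + 1), {γ | (y ^ n).coeff γ ≠ 0 ∧ φ γ ≤ R} := by
      rintro γ ⟨hγ, hR⟩
      have hex : ∃ n : ℕ, (y ^ n).coeff γ ≠ 0 := by
        by_contra h
        push_neg at h
        apply hγ
        rw [hvdef, HahnSeries.SummableFamily.coeff_hsum]
        apply finsum_eq_zero_of_forall_eq_zero
        intro n
        simpa [hyo] using h n
      obtain ⟨n, hn⟩ := hex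
      have hnle : (n : ℝ) * ε ≤ R := le_trans (pow_support_bound φ hε n γ hn) hR
      have hnN : n < N + 1 := by
        have h1 : (n : ℝ) ≤ R / ε := (le_div_iff₀ hε0).2 hnle
        have h2 : (n : ℝ) < N := lt_of_le_of_lt h1 hN
        have h3 : n < N := by exact_mod_cast h2
        omega
      exact Set.mem_biUnion (Finset.mem_range.2 hnN) ⟨hn, hR⟩
    exact (Set.Finite.biUnion (Finset.range (N + 1)).finite_toSet
      (fun n _ => nov_pow φ hynov n R)).subset hsub
  have hmul : (1 - y) * v = 1 := HahnSeries.SummableFamily.one_sub_self_mul_hsum_powers hyo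
  have h1y : 1 - y = HahnSeries.single (-x.order) r * x := by rw [hydef]; ring
  refine ⟨HahnSeries.single (-x.order) r * v, nov_mul φ (nov_single φ _ _) hvnov, ?_⟩
  calc x * (HahnSeries.single (-x.order) r * v) = (1 - y) * v := by rw [h1y]; ring
    _ = 1 := hmul

/-- The Novikov subring of the Hahn series ring. -/
def novSubring : Subring (HahnSeries Γ ℂ) where
  carrier := {x | NovikovCond φ x.coeff}
  zero_mem' := fun R => (Set.finite_empty.subset (by simp))
  one_mem' := nov_one φ
  add_mem' := by
    intro a b ha hb
    have := nov_sub φ ha (x := a) (y := -b) (by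
      intro R
      apply (hb R).subset
      rintro γ ⟨hγ, hR⟩
      exact ⟨by simpa using hγ, hR⟩)
    simpa using this
  neg_mem' := by
    intro a ha R
    apply (ha R).subset
    rintro γ ⟨hγ, hR⟩
    exact ⟨by simpa using hγ, hR⟩
  mul_mem' := fun ha hb => nov_mul φ ha hb

theorem main_aux (hm : ∀ a b : Γ, a ≤ b ↔ φ a ≤ φ b) :
    ∃ F : Field {f : Γ → ℂ // NovikovCond φ f},
      (∀ x y : {f : Γ → ℂ // NovikovCond φ f},
        (F.add x y).val = fun γ => x.val γ + y.val γ) ∧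
      (∀ x y : {f : Γ → ℂ // NovikovCond φ f},
        (F.mul x y).val = fun γ => ∑ᶠ γ' : Γ, x.val γ' * y.val (γ - γ')) := by
  classical
  have hIF : IsField (novSubring φ) := by
    refine ⟨⟨0, 1, fun h => zero_ne_one (α := HahnSeries Γ ℂ) (congrArg Subtype.val h)⟩,
      mul_comm, ?_⟩
    intro a ha
    obtain ⟨v, hv, hxv⟩ := nov_inv φ hm a.2 (fun h => ha (Subtype.ext h))
    exact ⟨⟨v, hv⟩, Subtype.ext hxv⟩
  letI : Field (novSubring φ) := hIF.toField
  let e : {f : Γ → ℂ // NovikovCond φ f} ≃ novSubring φ :=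
    { toFun := fun f => ⟨⟨f.1, nov_isPWO φ hm f.2⟩, f.2⟩
      invFun := fun x => ⟨x.1.coeff, x.2⟩
      left_inv := fun f => rfl
      right_inv := fun x => rfl }
  refine ⟨e.field, ?_, ?_⟩
  · intro x y
    have : e.field.add x y = e.symm (e x + e y) := rfl
    rw [this]
    funext γ
    exact HahnSeries.coeff_add
  · intro x y
    have : e.field.mul x y = e.symm (e x * e y) := rfl
    rw [this]
    funext γ
    show ((e x).1 * (e y).1).coeff γ = _
    rw [HahnSeries.coeff_mul]
    set s := Finset.antidiagonal (e x).1.isPWO_support (e y).1.isPWO_support γ with hs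
    have hsupp : (Function.support fun γ' => x.val γ' * y.val (γ - γ')) ⊆
        ↑(s.image Prod.fst) := by
      intro γ' hγ'
      have hx : x.val γ' ≠ 0 := fun h => hγ' (by simp [h])
      have hy : y.val (γ - γ') ≠ 0 := fun h => hγ' (by simp [h])
      have hmem : (γ', γ - γ') ∈ s := by
        rw [hs, Finset.mem_antidiagonal]
        exact ⟨hx, hy, by rw [add_sub_cancel]⟩
      exact Finset.mem_coe.2 (Finset.mem_image_of_mem _ hmem)
    rw [finsum_eq_finset_sum_of_support_subset _ hsupp]
    rw [Finset.sum_image (fun p hp q hq hpq => ?_)]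
    · refine (Finset.sum_congr rfl fun p hp => ?_).symm
      rw [hs, Finset.mem_antidiagonal] at hp
      have h12 : γ - p.1 = p.2 := by
        rw [← hp.2.2]; abel
      rw [h12]
      rfl
    · rw [hs, Finset.mem_coe, Finset.mem_antidiagonal] at hp hq
      have h2 : p.2 = q.2 := by
        have := hp.2.2.trans hq.2.2.symm
        rw [hpq] at this
        exact add_left_cancel this
      exact Prod.ext hpq h2

end Aux

theorem stmt_1 {Γ : Type*} [AddCommGroup Γ] (r : ℕ) (b : Module.Basis (Fin r) ℤ Γ)
    (φ : Γ →+ ℝ) (hφ : Function.Injective φ) :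
    ∃ F : Field {f : Γ → ℂ // NovikovCond φ f},
      (∀ x y : {f : Γ → ℂ // NovikovCond φ f},
        (F.add x y).val = fun γ => x.val γ + y.val γ) ∧
      (∀ x y : {f : Γ → ℂ // NovikovCond φ f},
        (F.mul x y).val = fun γ => ∑ᶠ γ' : Γ, x.val γ' * y.val (γ - γ')) := by
  letI lo : LinearOrder Γ := LinearOrder.lift' φ hφ
  haveI : IsOrderedAddMonoid Γ :=
    { add_le_add_left := fun a b h c => by
        have h' : φ a ≤ φ b := h
        show φ (a + c) ≤ φ (b + c)
        simp only [map_add]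
        linarith }
  exact main_aux φ (fun a b => Iff.rfl)
end

section
/- Fix ρ ∈ ℝ. The subset Λ'_{φ,ρ} ⊆ Λ_φ of elements whose Dirichlet series converges for every s ∈ ℂ with Re(s) > ρ is a subring of the Novikov ring, and for each such s the map ev_s : Λ'_{φ,ρ} → ℂ, f ↦ f̂(s), is a ring homomorphism. -/
/-- Convolution product. -/
noncomputable def novConv {Γ : Type*} [AddCommGroup Γ] (f g : Γ → ℂ) : Γ → ℂ :=
  fun γ => ∑ᶠ γ' : Γ, f γ' * g (γ - γ')

/-- Membership in the subring `Λ'_{φ,ρ}`. -/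
def InLam' {Γ : Type*} [AddCommGroup Γ] (φ : Γ →+ ℝ) (ρ : ℝ) (f : Γ → ℂ) : Prop :=
  NovikovCond φ f ∧
    ∀ s : ℂ, ρ < s.re → Summable fun γ : Γ => f γ * Complex.exp (-s * (φ γ : ℂ))

/-- Evaluation of the Dirichlet series at `s`. -/
noncomputable def novEv {Γ : Type*} [AddCommGroup Γ] (φ : Γ →+ ℝ) (s : ℂ)
    (f : Γ → ℂ) : ℂ :=
  ∑' γ : Γ, f γ * Complex.exp (-s * (φ γ : ℂ))

section Aux

variable {Γ : Type*} [AddCommGroup Γ] (φ : Γ →+ ℝ)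

lemma nov_bddBelow {g : Γ → ℂ} (hg : NovikovCond φ g) :
    ∃ c : ℝ, ∀ b, g b ≠ 0 → c ≤ φ b := by
  obtain ⟨c, hc⟩ := (((hg 0).image φ).bddBelow)
  refine ⟨min c 0, fun b hb => ?_⟩
  rcases le_or_gt (φ b) 0 with h | h
  · exact (min_le_left _ _).trans (hc ⟨b, ⟨hb, h⟩, rfl⟩)
  · exact (min_le_right _ _).trans h.le

lemma conv_fiber_finite {f g : Γ → ℂ} (hf : NovikovCond φ f) (hg : NovikovCond φ g) (γ : Γ) :
    (Function.support fun a => f a * g (γ - a)).Finite := by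
  obtain ⟨c, hc⟩ := nov_bddBelow φ hg
  apply (hf (φ γ - c)).subset
  intro a ha
  simp only [Function.mem_support, ne_eq, mul_eq_zero, not_or] at ha
  refine ⟨ha.1, ?_⟩
  have h1 := hc _ ha.2
  have h2 : φ (γ - a) = φ γ - φ a := by simp
  linarith

lemma conv_eq_sum {f g : Γ → ℂ} (hf : NovikovCond φ f) (hg : NovikovCond φ g) (γ : Γ) :
    novConv f g γ = ∑ a ∈ (conv_fiber_finite φ hf hg γ).toFinset, f a * g (γ - a) :=
  finsum_eq_sum _ (conv_fiber_finite φ hf hg γ)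

lemma conv_novikov {f g : Γ → ℂ} (hf : NovikovCond φ f) (hg : NovikovCond φ g) :
    NovikovCond φ (novConv f g) := by
  intro R
  obtain ⟨cf, hcf⟩ := nov_bddBelow φ hf
  obtain ⟨cg, hcg⟩ := nov_bddBelow φ hg
  have hfin : (Set.image2 (· + ·) {a : Γ | f a ≠ 0 ∧ φ a ≤ R - cg}
      {b : Γ | g b ≠ 0 ∧ φ b ≤ R - cf}).Finite := (hf _).image2 _ (hg _)
  apply hfin.subset
  rintro γ ⟨hγ1, hγ2⟩
  have hex : ∃ a, f a * g (γ - a) ≠ 0 := by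
    by_contra h
    push_neg at h
    exact hγ1 (by simpa [novConv] using finsum_eq_zero_of_forall_eq_zero h)
  obtain ⟨a, ha⟩ := hex
  rw [mul_ne_zero_iff] at ha
  have hfa := hcf _ ha.1
  have hgb := hcg _ ha.2
  have hφ : φ (γ - a) = φ γ - φ a := by simp
  exact ⟨a, ⟨ha.1, by linarith⟩, γ - a, ⟨ha.2, by linarith⟩, by simp⟩

set_option maxHeartbeats 1000000 in
lemma conv_hasSum {f g : Γ → ℂ} (hf : NovikovCond φ f) (hg : NovikovCond φ g) {s : ℂ}
    (hfs : Summable fun γ : Γ => f γ * Complex.exp (-s * (φ γ : ℂ)))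
    (hgs : Summable fun γ : Γ => g γ * Complex.exp (-s * (φ γ : ℂ))) :
    HasSum (fun γ : Γ => novConv f g γ * Complex.exp (-s * (φ γ : ℂ)))
      ((∑' γ : Γ, f γ * Complex.exp (-s * (φ γ : ℂ))) *
        ∑' γ : Γ, g γ * Complex.exp (-s * (φ γ : ℂ))) := by
  have hEadd : ∀ a c : Γ, Complex.exp (-s * (φ (a + c) : ℂ)) =
      Complex.exp (-s * (φ a : ℂ)) * Complex.exp (-s * (φ c : ℂ)) := by
    intro a c
    rw [← Complex.exp_add]
    congr 1
    rw [map_add]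
    push_cast
    ring
  have hfn : Summable fun γ : Γ => ‖f γ * Complex.exp (-s * (φ γ : ℂ))‖ := hfs.norm
  have hgn : Summable fun γ : Γ => ‖g γ * Complex.exp (-s * (φ γ : ℂ))‖ := hgs.norm
  have hF : Summable fun p : Γ × Γ =>
      (f p.1 * Complex.exp (-s * (φ p.1 : ℂ))) * (g p.2 * Complex.exp (-s * (φ p.2 : ℂ))) :=
    summable_mul_of_summable_norm
      (f := fun γ : Γ => f γ * Complex.exp (-s * (φ γ : ℂ)))
      (g := fun γ : Γ => g γ * Complex.exp (-s * (φ γ : ℂ))) hfn hgn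
  have hmul : HasSum (fun p : Γ × Γ =>
      (f p.1 * Complex.exp (-s * (φ p.1 : ℂ))) * (g p.2 * Complex.exp (-s * (φ p.2 : ℂ))))
      ((∑' γ : Γ, f γ * Complex.exp (-s * (φ γ : ℂ))) *
        ∑' γ : Γ, g γ * Complex.exp (-s * (φ γ : ℂ))) := HasSum.mul
      (f := fun γ : Γ => f γ * Complex.exp (-s * (φ γ : ℂ)))
      (g := fun γ : Γ => g γ * Complex.exp (-s * (φ γ : ℂ)))
      hfs.hasSum hgs.hasSum hF
  -- reindex: (c, a) ↦ f a * g (c - a) * exp (-s φ c)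
  have hHsum : HasSum (fun p : Γ × Γ => f p.2 * g (p.1 - p.2) * Complex.exp (-s * (φ p.1 : ℂ)))
      ((∑' γ : Γ, f γ * Complex.exp (-s * (φ γ : ℂ))) *
        ∑' γ : Γ, g γ * Complex.exp (-s * (φ γ : ℂ))) := by
    have key : ((fun p : Γ × Γ => f p.2 * g (p.1 - p.2) * Complex.exp (-s * (φ p.1 : ℂ))) ∘
        ((Equiv.prodShear (Equiv.refl Γ) fun a => Equiv.addLeft a).trans (Equiv.prodComm Γ Γ))) =
        fun p : Γ × Γ =>
          (f p.1 * Complex.exp (-s * (φ p.1 : ℂ))) * (g p.2 * Complex.exp (-s * (φ p.2 : ℂ))) := by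
      funext p
      obtain ⟨a, c⟩ := p
      simp only [Function.comp_apply, Equiv.trans_apply, Equiv.prodShear_apply,
        Equiv.refl_apply, Equiv.coe_addLeft, Equiv.prodComm_apply, Prod.swap_prod_mk]
      rw [add_sub_cancel_left, hEadd]
      ring
    exact ((Equiv.prodShear (Equiv.refl Γ) fun a => Equiv.addLeft a).trans
      (Equiv.prodComm Γ Γ)).hasSum_iff.mp (key ▸ hmul)
  have hslice : ∀ c : Γ,
      HasSum (fun a => f a * g (c - a) * Complex.exp (-s * (φ c : ℂ)))
        (novConv f g c * Complex.exp (-s * (φ c : ℂ))) := by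
    intro c
    have hS := conv_fiber_finite φ hf hg c
    have h1 : HasSum (fun a => f a * g (c - a)) (∑ a ∈ hS.toFinset, f a * g (c - a)) := by
      apply hasSum_sum_of_ne_finset_zero
      intro a ha
      have : a ∉ Function.support fun a => f a * g (c - a) := fun h => ha (hS.mem_toFinset.mpr h)
      exact Function.notMem_support.mp this
    rw [conv_eq_sum φ hf hg c]
    exact h1.mul_right _
  exact hHsum.prod_fiberwise hslice

end Aux

theorem stmt_4 {Γ : Type*} [AddCommGroup Γ] [DecidableEq Γ] (r : ℕ) (b : Module.Basis (Fin r) ℤ Γ)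
    (φ : Γ →+ ℝ) (hφ : Function.Injective φ) (ρ : ℝ) :
    InLam' φ ρ (fun γ => if γ = 0 then 1 else 0) ∧
    (∀ f g : Γ → ℂ, InLam' φ ρ f → InLam' φ ρ g →
      InLam' φ ρ (fun γ => f γ + g γ) ∧ InLam' φ ρ (novConv f g)) ∧
    (∀ f : Γ → ℂ, InLam' φ ρ f → InLam' φ ρ (fun γ => -f γ)) ∧
    (∀ s : ℂ, ρ < s.re →
      (novEv φ s (fun γ => if γ = 0 then 1 else 0) = 1) ∧
      (∀ f g : Γ → ℂ, InLam' φ ρ f → InLam' φ ρ g →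
        novEv φ s (fun γ => f γ + g γ) = novEv φ s f + novEv φ s g ∧
        novEv φ s (novConv f g) = novEv φ s f * novEv φ s g)) := by
  refine ⟨⟨?_, ?_⟩, fun f g hfl hgl => ⟨⟨?_, ?_⟩, ?_, ?_⟩, fun f hfl => ⟨?_, ?_⟩, fun s hs => ⟨?_, ?_⟩⟩
  · -- Novikov for delta
    intro R
    apply (Set.finite_singleton (0 : Γ)).subset
    rintro γ ⟨h1, -⟩
    rw [Set.mem_singleton_iff]
    by_contra h
    simp [h] at h1
  · -- summable for delta
    intro s _
    apply summable_of_ne_finset_zero (s := {(0 : Γ)})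
    intro γ hγ
    simp only [Finset.mem_singleton] at hγ
    simp [hγ]
  · -- Novikov for sum
    intro R
    apply ((hfl.1 R).union (hgl.1 R)).subset
    rintro γ ⟨h1, h2⟩
    by_contra h
    simp only [Set.mem_union, Set.mem_setOf_eq, not_or, not_and, not_not] at h
    have hf0 : f γ = 0 := by by_contra hf; exact (h.1 hf) h2
    have hg0 : g γ = 0 := by by_contra hg; exact (h.2 hg) h2
    exact h1 (by simp [hf0, hg0])
  · -- summable for sum
    intro s hs
    have := (hfl.2 s hs).add (hgl.2 s hs)
    simpa [add_mul] using this
  · exact conv_novikov φ hfl.1 hgl.1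
  · intro s hs
    exact (conv_hasSum φ hfl.1 hgl.1 (hfl.2 s hs) (hgl.2 s hs)).summable
  · -- Novikov for neg
    intro R
    apply (hfl.1 R).subset
    rintro γ ⟨h1, h2⟩
    exact ⟨by simpa using h1, h2⟩
  · intro s hs
    simpa [neg_mul] using (hfl.2 s hs).neg
  · -- novEv delta = 1
    rw [novEv, tsum_eq_single 0]
    · simp
    · intro γ hγ
      simp [hγ]
  · intro f g hfl hgl
    constructor
    · rw [novEv, novEv, novEv, ← Summable.tsum_add (hfl.2 s hs) (hgl.2 s hs)]
      congr 1
      funext γ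
      ring
    · exact (conv_hasSum φ hfl.1 hgl.1 (hfl.2 s hs) (hgl.2 s hs)).tsum_eq
end

section
/- Let H be a Hilbert space and A : H → H a densely defined self-adjoint positive operator. Let 0 < a < b < ∞ and suppose H = H₁ ⊕ H₂ is a decomposition into closed subspaces with H₁ ∩ H₂ = 0 such that ⟨Ax₁, x₁⟩ ≤ a‖x₁‖² for all x₁ ∈ H₁ (in the domain of A) and ⟨Ax₂, x₂⟩ ≥ b‖x₂‖² for all x₂ ∈ H₂ (in the domain of A). Then the spectrum of A does not intersect the open interval (a, b). -/
open scoped InnerProductSpace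

theorem stmt_5 {H : Type*} [NormedAddCommGroup H] [InnerProductSpace ℂ H]
    [CompleteSpace H]
    (A : H →L[ℂ] H) (hA : IsSelfAdjoint A)
    (hpos : ∀ x : H, 0 ≤ (⟪A x, x⟫_ℂ).re)
    (a b : ℝ) (ha : 0 < a) (hab : a < b)
    (H₁ H₂ : Submodule ℂ H) (h1c : IsClosed (H₁ : Set H))
    (h2c : IsClosed (H₂ : Set H))
    (hdisj : H₁ ⊓ H₂ = ⊥) (hsum : H₁ ⊔ H₂ = ⊤)
    (hb1 : ∀ x ∈ H₁, (⟪A x, x⟫_ℂ).re ≤ a * ‖x‖ ^ 2)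
    (hb2 : ∀ x ∈ H₂, b * ‖x‖ ^ 2 ≤ (⟪A x, x⟫_ℂ).re) :
    ∀ μ : ℝ, μ ∈ Set.Ioo a b → (μ : ℂ) ∉ spectrum ℂ A := by
  intro μ hμ
  obtain ⟨haμ, hμb⟩ := hμ
  rw [spectrum.notMem_iff]
  set T : H →L[ℂ] H := algebraMap ℂ (H →L[ℂ] H) (μ : ℂ) - A with hTdef
  -- T is self-adjoint
  have hTsa : IsSelfAdjoint T := by
    refine IsSelfAdjoint.sub ?_ hA
    exact IsSelfAdjoint.algebraMap _ (by simpa [IsSelfAdjoint] using Complex.conj_ofReal μ)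
  have hTsymm : ∀ x y : H, ⟪T x, y⟫_ℂ = ⟪x, T y⟫_ℂ := fun x y => hTsa.isSymmetric x y
  -- compute real part of ⟪T x, x⟫
  have hTquad : ∀ x : H, (⟪T x, x⟫_ℂ).re = μ * ‖x‖ ^ 2 - (⟪A x, x⟫_ℂ).re := by
    intro x
    have hx : T x = (μ : ℂ) • x - A x := by
      simp [hTdef, Algebra.algebraMap_eq_smul_one]
    rw [hx, inner_sub_left, inner_smul_left, inner_self_eq_norm_sq_to_K]
    simp [Complex.conj_ofReal, Complex.sub_re, ← Complex.ofReal_pow, ← Complex.ofReal_mul]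
  -- the decomposition and projections
  have hcompl : IsCompl H₁ H₂ := ⟨disjoint_iff.mpr hdisj, codisjoint_iff.mpr hsum⟩
  set P := H₁.linearProjOfClosedCompl H₂ hcompl h1c h2c with hP
  set Q := H₂.linearProjOfClosedCompl H₁ hcompl.symm h2c h1c with hQ
  have hdecomp : ∀ x : H, (P x : H) + (Q x : H) = x := by
    intro x
    simp [hP, hQ, Submodule.coe_continuous_linearProjOfClosedCompl']
    exact Submodule.projection_add_projection_eq_self hcompl x
  clear_value P Q
  clear hP hQ
  set c : ℝ := min (μ - a) (b - μ) with hc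
  have hcpos : 0 < c := lt_min (by linarith) (by linarith)
  -- key quadratic form estimate
  have key : ∀ u v : H, u ∈ H₁ → v ∈ H₂ →
      c * (‖u‖ ^ 2 + ‖v‖ ^ 2) ≤ (⟪T (u + v), u - v⟫_ℂ).re := by
    intro u v hu hv
    have hcross : (⟪T v, u⟫_ℂ).re = (⟪T u, v⟫_ℂ).re := by
      rw [hTsymm v u, ← inner_conj_symm v (T u)]
      exact Complex.conj_re _
    have hexp : (⟪T (u + v), u - v⟫_ℂ).re
        = (⟪T u, u⟫_ℂ).re - (⟪T v, v⟫_ℂ).re := by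
      rw [map_add]
      simp only [inner_add_left, inner_sub_right, Complex.add_re, Complex.sub_re]
      linarith [hcross]
    have h1 : (μ - a) * ‖u‖ ^ 2 ≤ (⟪T u, u⟫_ℂ).re := by
      rw [hTquad]
      have := hb1 u hu
      linarith
    have h2 : (⟪T v, v⟫_ℂ).re ≤ -((b - μ) * ‖v‖ ^ 2) := by
      rw [hTquad]
      have := hb2 v hv
      linarith
    have hcu : c * ‖u‖ ^ 2 ≤ (μ - a) * ‖u‖ ^ 2 :=
      mul_le_mul_of_nonneg_right (min_le_left _ _) (sq_nonneg _)
    have hcv : c * ‖v‖ ^ 2 ≤ (b - μ) * ‖v‖ ^ 2 :=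
      mul_le_mul_of_nonneg_right (min_le_right _ _) (sq_nonneg _)
    rw [hexp]; linarith
  -- T is bounded below
  set C : ℝ := ‖P‖ + ‖Q‖ + 1 with hC
  have hCpos : 0 < C := by positivity
  have hexists : ∀ x : H, ∃ u v : H, u ∈ H₁ ∧ v ∈ H₂ ∧ u + v = x ∧ ‖u‖ + ‖v‖ ≤ C * ‖x‖ := by
    intro x
    refine ⟨(P x : H), (Q x : H), (P x).2, (Q x).2, hdecomp x, ?_⟩
    have h1 : ‖(P x : H)‖ ≤ ‖P‖ * ‖x‖ := P.le_opNorm x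
    have h2 : ‖(Q x : H)‖ ≤ ‖Q‖ * ‖x‖ := Q.le_opNorm x
    have h3 : (0:ℝ) ≤ ‖x‖ := norm_nonneg x
    rw [hC]; nlinarith
  have hbound : ∀ x : H, ‖x‖ ≤ (2 * C / c) * ‖T x‖ := by
    intro x
    rcases eq_or_ne x 0 with rfl | hx0
    · simp
    have hxpos : 0 < ‖x‖ := norm_pos_iff.mpr hx0
    obtain ⟨u, v, hu, hv, huv, huvC⟩ := hexists x
    have hkey := key u v hu hv
    rw [huv] at hkey
    have hxle : ‖x‖ ^ 2 ≤ 2 * (‖u‖ ^ 2 + ‖v‖ ^ 2) := by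
      have h3 : ‖x‖ ≤ ‖u‖ + ‖v‖ := by rw [← huv]; exact norm_add_le u v
      have h4 : ‖x‖ * ‖x‖ ≤ (‖u‖ + ‖v‖) * (‖u‖ + ‖v‖) :=
        mul_le_mul h3 h3 (norm_nonneg x) (by positivity)
      nlinarith [sq_nonneg (‖u‖ - ‖v‖), h4]
    have hcs : (⟪T x, u - v⟫_ℂ).re ≤ ‖T x‖ * (‖u‖ + ‖v‖) := by
      calc (⟪T x, u - v⟫_ℂ).re ≤ ‖(⟪T x, u - v⟫_ℂ)‖ := Complex.re_le_norm _
        _ ≤ ‖T x‖ * ‖u - v‖ := norm_inner_le_norm _ _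
        _ ≤ ‖T x‖ * (‖u‖ + ‖v‖) :=
            mul_le_mul_of_nonneg_left (norm_sub_le u v) (norm_nonneg _)
    have hchain : c * (‖x‖ ^ 2 / 2) ≤ ‖T x‖ * (C * ‖x‖) := by
      have h1 : c * (‖x‖ ^ 2 / 2) ≤ c * (‖u‖ ^ 2 + ‖v‖ ^ 2) := by
        apply mul_le_mul_of_nonneg_left _ hcpos.le; linarith
      have h2 : ‖T x‖ * (‖u‖ + ‖v‖) ≤ ‖T x‖ * (C * ‖x‖) :=
        mul_le_mul_of_nonneg_left huvC (norm_nonneg _)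
      exact le_trans h1 (le_trans hkey (le_trans hcs h2))
    rw [div_mul_eq_mul_div, le_div_iff₀ hcpos]
    nlinarith [hchain, mul_pos hcpos hxpos, hxpos, norm_nonneg (T x)]
  -- conclude injectivity
  have hker : LinearMap.ker (T : H →ₗ[ℂ] H) = ⊥ := by
    rw [LinearMap.ker_eq_bot']
    intro x (hx : T x = 0)
    have := hbound x
    rw [hx] at this
    simp only [norm_zero, mul_zero] at this
    exact norm_le_zero_iff.mp this
  -- antilipschitz, closed range
  have hKnn : (0 : ℝ) ≤ 2 * C / c := by positivity
  have hanti : AntilipschitzWith ⟨2 * C / c, hKnn⟩ T :=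
    T.antilipschitz_of_bound fun x => hbound x
  haveI : CompleteSpace (LinearMap.range (T : H →ₗ[ℂ] H)) := hanti.completeSpace_range_clm
  -- dense range: orthogonal complement of range is trivial
  have horth : (LinearMap.range (T : H →ₗ[ℂ] H))ᗮ = ⊥ := by
    rw [Submodule.eq_bot_iff]
    intro z hz
    have hz' : ∀ y : H, ⟪T y, z⟫_ℂ = 0 := fun y =>
      (Submodule.mem_orthogonal _ z).mp hz (T y) (LinearMap.mem_range_self _ y)
    have hTz : T z = 0 := by
      have := hz' (T z)
      rw [hTsymm (T z) z] at this
      exact inner_self_eq_zero.mp (by rwa [← inner_conj_symm, map_eq_zero] at this)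
    have := hbound z
    rw [hTz] at this
    simp only [norm_zero, mul_zero] at this
    exact norm_le_zero_iff.mp this
  have hrange : LinearMap.range (T : H →ₗ[ℂ] H) = ⊤ := by
    have := Submodule.orthogonal_orthogonal (LinearMap.range (T : H →ₗ[ℂ] H))
    rw [horth, Submodule.bot_orthogonal_eq_top] at this
    exact this.symm
  exact ContinuousLinearMap.isUnit_iff_bijective.mpr
    ⟨LinearMap.ker_eq_bot.mp hker, LinearMap.range_eq_top.mp hrange⟩
end

section
/- Let (H, ⟨·,·⟩) be a Hilbert space, Q : H → H an orthogonal projection, and J : ℝ^m → H a linear isometry such that ‖(QJ - J)f‖ ≤ ε‖f‖ for all f, with ε < 1. Then (QJ)* QJ is invertible and R := QJ((QJ)*QJ)^{-1/2} : ℝ^m → H is a well-defined linear isometry onto an m-dimensional subspace of the range of Q, satisfying ‖R - J‖ ≤ Cε for a universal constant C. -/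
set_option maxHeartbeats 1000000
set_option linter.unusedSectionVars false

open scoped RealInnerProductSpace
open Finset

section Diag
variable {m : ℕ} {E : Type} [NormedAddCommGroup E] [InnerProductSpace ℝ E]
  [FiniteDimensional ℝ E]

noncomputable def diagOp (b : OrthonormalBasis (Fin m) ℝ E) (f : Fin m → ℝ) : E →L[ℝ] E :=
  LinearMap.toContinuousLinearMap
  { toFun := fun x => ∑ i, (f i * ⟪b i, x⟫) • b i
    map_add' := by
      intro x y
      simp [inner_add_right, mul_add, add_smul, Finset.sum_add_distrib]
    map_smul' := by
      intro c x
      simp [real_inner_smul_right, Finset.smul_sum, smul_smul]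
      congr 1; funext i; ring_nf }

lemma diagOp_apply (b : OrthonormalBasis (Fin m) ℝ E) (f : Fin m → ℝ) (x : E) :
    diagOp b f x = ∑ i, (f i * ⟪b i, x⟫) • b i := rfl

lemma inner_diagOp (b : OrthonormalBasis (Fin m) ℝ E) (f : Fin m → ℝ) (x : E) (j : Fin m) :
    ⟪b j, diagOp b f x⟫ = f j * ⟪b j, x⟫ := by
  rw [diagOp_apply, inner_sum]
  have horth := b.orthonormal
  rw [orthonormal_iff_ite] at horth
  simp [real_inner_smul_right, horth, mul_ite]

lemma diagOp_comp (b : OrthonormalBasis (Fin m) ℝ E) (f g : Fin m → ℝ) :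
    (diagOp b f).comp (diagOp b g) = diagOp b (fun i => f i * g i) := by
  ext x
  simp only [ContinuousLinearMap.comp_apply, diagOp_apply (f := f), inner_diagOp]
  rw [diagOp_apply]
  congr 1; funext i; ring_nf

lemma diagOp_one (b : OrthonormalBasis (Fin m) ℝ E) :
    diagOp b (fun _ => 1) = ContinuousLinearMap.id ℝ E := by
  ext x
  simp [diagOp_apply, b.sum_repr']

lemma diagOp_symm (b : OrthonormalBasis (Fin m) ℝ E) (f : Fin m → ℝ) (x y : E) :
    ⟪diagOp b f x, y⟫ = ⟪x, diagOp b f y⟫ := by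
  rw [diagOp_apply, diagOp_apply, sum_inner, inner_sum]
  congr 1; funext i
  rw [real_inner_smul_left, real_inner_smul_right, real_inner_comm (b i) x]
  ring

lemma diagOp_isSelfAdjoint (b : OrthonormalBasis (Fin m) ℝ E) (f : Fin m → ℝ) :
    IsSelfAdjoint (diagOp b f) := by
  rw [ContinuousLinearMap.isSelfAdjoint_iff_isSymmetric]
  intro x y
  exact diagOp_symm b f x y

lemma inner_diagOp_self (b : OrthonormalBasis (Fin m) ℝ E) (f : Fin m → ℝ) (x : E) :
    ⟪diagOp b f x, x⟫ = ∑ i, f i * (⟪b i, x⟫ * ⟪b i, x⟫) := by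
  rw [diagOp_apply, sum_inner]
  congr 1; funext i
  rw [real_inner_smul_left]
  ring

lemma norm_sq_eq (b : OrthonormalBasis (Fin m) ℝ E) (x : E) :
    ∑ i, ⟪b i, x⟫ * ⟪b i, x⟫ = ‖x‖ ^ 2 := by
  have := b.sum_inner_mul_inner x x
  rw [real_inner_self_eq_norm_sq] at this
  rw [← this]
  congr 1; funext i; rw [real_inner_comm x (b i)]

lemma diagOp_norm_apply_le (b : OrthonormalBasis (Fin m) ℝ E) (f : Fin m → ℝ) (c : ℝ)
    (hc : 0 ≤ c) (hf : ∀ i, |f i| ≤ c) (x : E) : ‖diagOp b f x‖ ≤ c * ‖x‖ := by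
  have h1 : ‖diagOp b f x‖ ^ 2 = ⟪diagOp b f x, diagOp b f x⟫ :=
    (real_inner_self_eq_norm_sq _).symm
  have h2 : ⟪diagOp b f x, diagOp b f x⟫ = ∑ i, (f i)^2 * (⟪b i, x⟫ * ⟪b i, x⟫) := by
    rw [diagOp_symm, ← ContinuousLinearMap.comp_apply, diagOp_comp]
    rw [real_inner_comm, inner_diagOp_self]
    congr 1; funext i; ring
  have h3 : ∑ i, (f i)^2 * (⟪b i, x⟫ * ⟪b i, x⟫) ≤ c^2 * ‖x‖^2 := by
    rw [← norm_sq_eq b x, Finset.mul_sum]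
    apply Finset.sum_le_sum
    intro i _
    have : (f i)^2 ≤ c^2 := by
      rw [← sq_abs]
      exact pow_le_pow_left₀ (abs_nonneg _) (hf i) 2
    have hnn : 0 ≤ ⟪b i, x⟫ * ⟪b i, x⟫ := mul_self_nonneg _
    nlinarith
  have : ‖diagOp b f x‖ ^ 2 ≤ (c * ‖x‖) ^ 2 := by rw [h1]; calc
    ⟪diagOp b f x, diagOp b f x⟫ ≤ c^2 * ‖x‖^2 := h2 ▸ h3
    _ = (c * ‖x‖)^2 := by ring
  have h4 := Real.sqrt_le_sqrt this
  rwa [Real.sqrt_sq (norm_nonneg _), Real.sqrt_sq (by positivity)] at h4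

end Diag

lemma diagOp_sub {m : ℕ} {E : Type} [NormedAddCommGroup E] [InnerProductSpace ℝ E]
    [FiniteDimensional ℝ E] (b : OrthonormalBasis (Fin m) ℝ E) (f g : Fin m → ℝ) :
    diagOp b f - diagOp b g = diagOp b (fun i => f i - g i) := by
  ext x
  simp [diagOp_apply, sub_mul, sub_smul, Finset.sum_sub_distrib]

theorem stmt_19 :
    ∃ C : ℝ, 0 < C ∧
      ∀ (m : ℕ) (H : Type) [NormedAddCommGroup H] [InnerProductSpace ℝ H]
        [CompleteSpace H]
        (Q : H →L[ℝ] H), IsIdempotentElem Q → IsSelfAdjoint Q →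
        ∀ (J : EuclideanSpace ℝ (Fin m) →ₗᵢ[ℝ] H) (ε : ℝ), 0 ≤ ε → ε < 1 →
        (∀ f : EuclideanSpace ℝ (Fin m), ‖Q (J f) - J f‖ ≤ ε * ‖f‖) →
        IsUnit ((ContinuousLinearMap.adjoint
            (Q.comp J.toContinuousLinearMap)).comp
            (Q.comp J.toContinuousLinearMap)) ∧
        ∃ S : EuclideanSpace ℝ (Fin m) →L[ℝ] EuclideanSpace ℝ (Fin m),
          IsSelfAdjoint S ∧ (∀ x, (0 : ℝ) ≤ inner ℝ (S x) x) ∧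
          S.comp S = (ContinuousLinearMap.adjoint
            (Q.comp J.toContinuousLinearMap)).comp
            (Q.comp J.toContinuousLinearMap) ∧
          ∃ Sinv : EuclideanSpace ℝ (Fin m) →L[ℝ] EuclideanSpace ℝ (Fin m),
            S.comp Sinv = ContinuousLinearMap.id ℝ _ ∧
            Sinv.comp S = ContinuousLinearMap.id ℝ _ ∧
            (∀ x, ‖(Q.comp J.toContinuousLinearMap).comp Sinv x‖ = ‖x‖) ∧
            (∀ x, ((Q.comp J.toContinuousLinearMap).comp Sinv) x ∈
              LinearMap.range (Q : H →ₗ[ℝ] H)) ∧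
            ‖(Q.comp J.toContinuousLinearMap).comp Sinv
              - J.toContinuousLinearMap‖ ≤ C * ε := by
  refine ⟨5, by norm_num, ?_⟩
  intro m H _ _ _ Q hQidem hQsa J ε hε0 hε1 hQJ
  set E := EuclideanSpace ℝ (Fin m)
  set A : E →L[ℝ] H := Q.comp J.toContinuousLinearMap with hA
  set T : E →L[ℝ] E := (ContinuousLinearMap.adjoint A).comp A with hT
  have hAapp : ∀ x : E, A x = Q (J x) := fun x => rfl
  have hAJ : ∀ x : E, ‖A x - J x‖ ≤ ε * ‖x‖ := fun x => hQJ x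
  have hAup : ∀ x : E, ‖A x‖ ≤ 2 * ‖x‖ := by
    intro x
    have h1 : ‖A x‖ ≤ ‖A x - J x‖ + ‖J x‖ := by
      have := norm_add_le (A x - J x) (J x); simpa using this
    have := hAJ x
    rw [J.norm_map] at h1
    nlinarith [norm_nonneg x]
  have hAlow : ∀ x : E, (1 - ε) * ‖x‖ ≤ ‖A x‖ := by
    intro x
    have h1 : ‖J x‖ ≤ ‖J x - A x‖ + ‖A x‖ := by
      have := norm_add_le (J x - A x) (A x); simpa using this
    rw [norm_sub_rev] at h1
    have := hAJ x
    rw [J.norm_map] at h1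
    nlinarith
  have hTsa : IsSelfAdjoint T := by
    rw [IsSelfAdjoint, ContinuousLinearMap.star_eq_adjoint, hT,
      ContinuousLinearMap.adjoint_comp, ContinuousLinearMap.adjoint_adjoint]
  have hsym : (T : E →ₗ[ℝ] E).IsSymmetric :=
    (ContinuousLinearMap.isSelfAdjoint_iff_isSymmetric).mp hTsa
  have hfin : Module.finrank ℝ E = m := finrank_euclideanSpace_fin
  set b : OrthonormalBasis (Fin m) ℝ E := hsym.eigenvectorBasis hfin with hb
  set μ : Fin m → ℝ := hsym.eigenvalues hfin with hμ
  have hTb : ∀ i, T (b i) = μ i • b i := by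
    intro i
    exact_mod_cast hsym.apply_eigenvectorBasis hfin i
  have hTinner : ∀ x : E, ⟪T x, x⟫ = ‖A x‖ ^ 2 := by
    intro x
    rw [hT, ContinuousLinearMap.comp_apply, ContinuousLinearMap.adjoint_inner_left,
      real_inner_self_eq_norm_sq]
  have hbnorm : ∀ i, ⟪b i, b i⟫ = (1 : ℝ) := by
    intro i
    rw [real_inner_self_eq_norm_sq, b.orthonormal.1 i]; norm_num
  have hμval : ∀ i, μ i = ‖A (b i)‖ ^ 2 := by
    intro i
    rw [← hTinner, hTb i, real_inner_smul_left, hbnorm, mul_one]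
  have hμlow : ∀ i, (1 - ε) ^ 2 ≤ μ i := by
    intro i
    rw [hμval]
    have := hAlow (b i)
    rw [b.orthonormal.1 i, mul_one] at this
    exact pow_le_pow_left₀ (by linarith) this 2
  have hμup : ∀ i, μ i ≤ (1 + ε) ^ 2 := by
    intro i
    rw [hμval]
    have h1 : ‖A (b i)‖ ≤ ‖A (b i) - J (b i)‖ + ‖J (b i)‖ := by
      have := norm_add_le (A (b i) - J (b i)) (J (b i)); simpa using this
    have h2 := hAJ (b i)
    rw [J.norm_map, b.orthonormal.1 i] at h1
    rw [b.orthonormal.1 i, mul_one] at h2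
    exact pow_le_pow_left₀ (norm_nonneg _) (by linarith) 2
  set s : Fin m → ℝ := fun i => Real.sqrt (μ i) with hs
  have hslow : ∀ i, 1 - ε ≤ s i := by
    intro i
    rw [hs]
    rw [show (1 : ℝ) - ε = Real.sqrt ((1 - ε) ^ 2) by
      rw [Real.sqrt_sq (by linarith)]]
    exact Real.sqrt_le_sqrt (hμlow i)
  have hsup : ∀ i, s i ≤ 1 + ε := by
    intro i
    rw [hs]
    rw [show (1 : ℝ) + ε = Real.sqrt ((1 + ε) ^ 2) by
      rw [Real.sqrt_sq (by linarith)]]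
    exact Real.sqrt_le_sqrt (hμup i)
  have hspos : ∀ i, 0 < s i := fun i => lt_of_lt_of_le (by linarith) (hslow i)
  have hμnn : ∀ i, 0 ≤ μ i := fun i => le_trans (by positivity) (hμlow i)
  have hTdiag : T = diagOp b μ := by
    refine ContinuousLinearMap.ext fun x => ?_
    conv_lhs => rw [← b.sum_repr' x]
    rw [map_sum, diagOp_apply]
    refine Finset.sum_congr rfl fun i _ => ?_
    rw [show T (⟪b i, x⟫ • b i) = ⟪b i, x⟫ • T (b i) from T.map_smul _ _, hTb i,
      smul_smul, mul_comm]
  set S : E →L[ℝ] E := diagOp b s with hS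
  set Sinv : E →L[ℝ] E := diagOp b (fun i => (s i)⁻¹) with hSinv
  have hSS : S.comp S = T := by
    rw [hS, diagOp_comp, hTdiag]
    congr 1; funext i
    exact Real.mul_self_sqrt (hμnn i)
  have hSSinv : S.comp Sinv = ContinuousLinearMap.id ℝ E := by
    rw [hS, hSinv, diagOp_comp, ← diagOp_one b]
    congr 1; funext i
    exact mul_inv_cancel₀ (hspos i).ne'
  have hSinvS : Sinv.comp S = ContinuousLinearMap.id ℝ E := by
    rw [hS, hSinv, diagOp_comp, ← diagOp_one b]
    congr 1; funext i
    exact inv_mul_cancel₀ (hspos i).ne'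
  have hUnit : IsUnit T := by
    refine isUnit_iff_exists.mpr ⟨Sinv.comp Sinv, ?_, ?_⟩
    · show T * Sinv.comp Sinv = 1
      rw [ContinuousLinearMap.mul_def, ContinuousLinearMap.one_def, ← hSS,
        ContinuousLinearMap.comp_assoc, ← ContinuousLinearMap.comp_assoc S Sinv Sinv,
        hSSinv, ContinuousLinearMap.id_comp, hSSinv]
    · show Sinv.comp Sinv * T = 1
      rw [ContinuousLinearMap.mul_def, ContinuousLinearMap.one_def, ← hSS,
        ContinuousLinearMap.comp_assoc, ← ContinuousLinearMap.comp_assoc Sinv S S,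
        hSinvS, ContinuousLinearMap.id_comp, hSinvS]
  have hIso : ∀ x : E, ‖A (Sinv x)‖ = ‖x‖ := by
    intro x
    have h3 : S (Sinv x) = x := by
      have h := ContinuousLinearMap.ext_iff.mp hSSinv x
      simpa using h
    have key : ‖A (Sinv x)‖ ^ 2 = ‖x‖ ^ 2 := by
      calc ‖A (Sinv x)‖ ^ 2 = ⟪T (Sinv x), Sinv x⟫ := (hTinner _).symm
        _ = ⟪S (S (Sinv x)), Sinv x⟫ := by
            rw [← hSS]; rfl
        _ = ⟪S (Sinv x), S (Sinv x)⟫ := diagOp_symm b s _ _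
        _ = ‖S (Sinv x)‖ ^ 2 := real_inner_self_eq_norm_sq _
        _ = ‖x‖ ^ 2 := by rw [h3]
    have h5 := congrArg Real.sqrt key
    rwa [Real.sqrt_sq (norm_nonneg _), Real.sqrt_sq (norm_nonneg _)] at h5
  refine ⟨hUnit, S, diagOp_isSelfAdjoint b s, ?_, hSS, Sinv, hSSinv, hSinvS,
    ?_, ?_, ?_⟩
  · intro x
    rw [hS, inner_diagOp_self]
    apply Finset.sum_nonneg
    intro i _
    exact mul_nonneg (Real.sqrt_nonneg _) (mul_self_nonneg _)
  · intro x
    exact hIso x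
  · intro x
    exact ⟨J (Sinv x), rfl⟩
  · -- norm bound
    apply ContinuousLinearMap.opNorm_le_bound _ (by positivity)
    intro x
    by_cases hcase : ε ≤ 1 / 2
    · have hptr : (A.comp Sinv - J.toContinuousLinearMap) x = A (Sinv x) - J x := rfl
      rw [hptr]
      have hsplit : ‖A (Sinv x) - J x‖ ≤ ‖A (Sinv x) - A x‖ + ‖A x - J x‖ := by
        have := norm_add_le (A (Sinv x) - A x) (A x - J x)
        rw [sub_add_sub_cancel] at this
        exact this
      have hd : Sinv x - x = diagOp b (fun i => (s i)⁻¹ - 1) x := by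
        have h := ContinuousLinearMap.ext_iff.mp
          (diagOp_sub b (fun i => (s i)⁻¹) (fun _ => 1)) x
        rw [ContinuousLinearMap.sub_apply] at h
        have h1 : diagOp b (fun _ : Fin m => (1 : ℝ)) x = x := by rw [diagOp_one]; rfl
        rw [h1] at h
        exact h
      have hfb : ∀ i, |(s i)⁻¹ - 1| ≤ 2 * ε := by
        intro i
        have h1 : |1 - s i| ≤ ε := by
          rw [abs_le]; constructor <;> [linarith [hsup i]; linarith [hslow i]]
        have h2 : (1 : ℝ) / 2 ≤ s i := by linarith [hslow i]
        have h3 : (s i)⁻¹ ≤ 2 := by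
          rw [inv_le_comm₀ (hspos i) (by norm_num)]
          linarith
        have h4 : (s i)⁻¹ - 1 = (1 - s i) * (s i)⁻¹ := by
          field_simp
        rw [h4, abs_mul, abs_inv, abs_of_pos (hspos i)]
        calc |1 - s i| * (s i)⁻¹ ≤ ε * 2 :=
              mul_le_mul h1 h3 (by positivity) hε0
          _ = 2 * ε := by ring
      have hSd : ‖Sinv x - x‖ ≤ 2 * ε * ‖x‖ := by
        rw [hd]
        exact diagOp_norm_apply_le b _ (2 * ε) (by positivity) hfb x
      have h5 : ‖A (Sinv x) - A x‖ = ‖A (Sinv x - x)‖ := by rw [map_sub]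
      have h6 : ‖A (Sinv x - x)‖ ≤ 2 * ‖Sinv x - x‖ := hAup _
      have h7 := hAJ x
      calc ‖A (Sinv x) - J x‖ ≤ ‖A (Sinv x) - A x‖ + ‖A x - J x‖ := hsplit
        _ ≤ 2 * (2 * ε * ‖x‖) + ε * ‖x‖ := by
            rw [h5]
            have := le_trans h6 (by nlinarith [norm_nonneg (Sinv x - x)] :
              2 * ‖Sinv x - x‖ ≤ 2 * (2 * ε * ‖x‖))
            linarith
        _ = 5 * ε * ‖x‖ := by ring
    · push_neg at hcase
      have hptr : (A.comp Sinv - J.toContinuousLinearMap) x = A (Sinv x) - J x := rfl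
      rw [hptr]
      have h1 : ‖A (Sinv x) - J x‖ ≤ ‖A (Sinv x)‖ + ‖J x‖ := norm_sub_le _ _
      rw [hIso x, J.norm_map] at h1
      nlinarith [norm_nonneg x]
end
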